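/- Let A : X → Y and B, C : Y → X satisfy A(BA)² = ABACA = ACABA = (AC)²A. For each n ∈ ℕ, the linear map Φ from (R(BA−I)+N((BA−I)^{n+1}))/(R(BA−I)+N((BA−I)^n)) to (R(AC−I)+N((AC−I)^{n+1}))/(R(AC−I)+N((AC−I)^n)) induced by x ↦ ACAx is well-defined and injective; consequently k_n(BA−I) ≤ k_n(AC−I). -/

import Mathlib

open Polynomial ContinuousLinearMap

universe u

variable {X Y : Type u} [NormedAddCommGroup X] [NormedSpace ℂ X] [CompleteSpace X]
  [NormedAddCommGroup Y] [NormedSpace ℂ Y] [CompleteSpace Y]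

private lemma pow_intertwine {X Y : Type u} [NormedAddCommGroup X] [NormedSpace ℂ X]
    [NormedAddCommGroup Y] [NormedSpace ℂ Y]
    (T : X →L[ℂ] X) (S : Y →L[ℂ] Y) (M : X →L[ℂ] Y)
    (hSM : ∀ x, S (M x) = M (T x)) :
    ∀ (k : ℕ) (x : X), (S ^ k) (M x) = M ((T ^ k) x) := by
  intro k
  induction k with
  | zero => intro x; simp
  | succ k ih =>
    intro x
    rw [pow_succ, pow_succ]
    simp only [ContinuousLinearMap.mul_apply]
    rw [hSM, ih]

private lemma map_mem_sup {X Y : Type u} [NormedAddCommGroup X] [NormedSpace ℂ X]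
    [NormedAddCommGroup Y] [NormedSpace ℂ Y]
    (T : X →L[ℂ] X) (S : Y →L[ℂ] Y) (M : X →L[ℂ] Y)
    (hSM : ∀ x, S (M x) = M (T x)) (k : ℕ) (x : X)
    (hx : x ∈ LinearMap.range (T : X →ₗ[ℂ] X) ⊔ LinearMap.ker ((T ^ k : X →L[ℂ] X) : X →ₗ[ℂ] X)) :
    M x ∈ LinearMap.range (S : Y →ₗ[ℂ] Y) ⊔ LinearMap.ker ((S ^ k : Y →L[ℂ] Y) : Y →ₗ[ℂ] Y) := by
  obtain ⟨a, ha, p, hp, rfl⟩ := Submodule.mem_sup.mp hx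
  obtain ⟨w, rfl⟩ := LinearMap.mem_range.mp ha
  rw [map_add]
  refine Submodule.add_mem _ (Submodule.mem_sup_left (LinearMap.mem_range.mpr ⟨M w, hSM w⟩)) ?_
  refine Submodule.mem_sup_right (LinearMap.mem_ker.mpr ?_)
  rw [ContinuousLinearMap.coe_coe, pow_intertwine T S M hSM k p, (by simpa only [ContinuousLinearMap.coe_coe] using LinearMap.mem_ker.mp hp : (T ^ k) p = 0), map_zero]

private lemma inj_core {X Y : Type u} [NormedAddCommGroup X] [NormedSpace ℂ X]
    [NormedAddCommGroup Y] [NormedSpace ℂ Y]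
    (T : X →L[ℂ] X) (S : Y →L[ℂ] Y) (M : X →L[ℂ] Y) (W : Y →L[ℂ] X)
    (hSM : ∀ x, S (M x) = M (T x)) (hTW : ∀ y, T (W y) = W (S y))
    (hWM : ∀ x, W (M x) - x ∈ LinearMap.range (T : X →ₗ[ℂ] X)) (n : ℕ) (x : X)
    (hx1 : x ∈ LinearMap.range (T : X →ₗ[ℂ] X) ⊔ LinearMap.ker ((T ^ (n + 1) : X →L[ℂ] X) : X →ₗ[ℂ] X))
    (hx2 : M x ∈ LinearMap.range (S : Y →ₗ[ℂ] Y) ⊔ LinearMap.ker ((S ^ n : Y →L[ℂ] Y) : Y →ₗ[ℂ] Y)) :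
    x ∈ LinearMap.range (T : X →ₗ[ℂ] X) ⊔ LinearMap.ker ((T ^ n : X →L[ℂ] X) : X →ₗ[ℂ] X) := by
  obtain ⟨a, ha, p, hp, rfl⟩ := Submodule.mem_sup.mp hx1
  obtain ⟨w, rfl⟩ := LinearMap.mem_range.mp ha
  have hMp : M p ∈ LinearMap.range (S : Y →ₗ[ℂ] Y) ⊔ LinearMap.ker ((S ^ n : Y →L[ℂ] Y) : Y →ₗ[ℂ] Y) := by
    have h0 : M (T w + p) - S (M w) = M p := by rw [map_add, hSM]; abel
    rw [← h0]
    exact Submodule.sub_mem _ hx2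
      (Submodule.mem_sup_left (LinearMap.mem_range.mpr ⟨M w, rfl⟩))
  obtain ⟨b, hb, z, hz, hbz⟩ := Submodule.mem_sup.mp hMp
  obtain ⟨y, rfl⟩ := LinearMap.mem_range.mp hb
  obtain ⟨r, hr⟩ := LinearMap.mem_range.mp (hWM p)
  have hWz : (T ^ n) (W z) = 0 := by
    rw [pow_intertwine S T W hTW n z, (by simpa only [ContinuousLinearMap.coe_coe] using LinearMap.mem_ker.mp hz : (S ^ n) z = 0), map_zero]
  have hpmem : p ∈ LinearMap.range (T : X →ₗ[ℂ] X) ⊔ LinearMap.ker ((T ^ n : X →L[ℂ] X) : X →ₗ[ℂ] X) := by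
    have h1 : W (M p) = T (W y) + W z := by rw [← hbz, map_add, hTW, ContinuousLinearMap.coe_coe]
    have hps : p = T (W y - r) + W z := by
      rw [map_sub, (by simpa only [ContinuousLinearMap.coe_coe] using hr : T r = W (M p) - p), h1]; abel
    rw [hps]
    exact Submodule.add_mem _ (Submodule.mem_sup_left (LinearMap.mem_range.mpr ⟨W y - r, rfl⟩))
      (Submodule.mem_sup_right (LinearMap.mem_ker.mpr hWz))
  exact Submodule.add_mem _ (Submodule.mem_sup_left (LinearMap.mem_range.mpr ⟨w, rfl⟩)) hpmem

theorem stmt10 (A : X →L[ℂ] Y) (B C : Y →L[ℂ] X)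
    (h1 : A ∘L B ∘L A ∘L B ∘L A = A ∘L B ∘L A ∘L C ∘L A)
    (h2 : A ∘L B ∘L A ∘L C ∘L A = A ∘L C ∘L A ∘L B ∘L A)
    (h3 : A ∘L C ∘L A ∘L B ∘L A = A ∘L C ∘L A ∘L C ∘L A) (n : ℕ) :
    (∃ Φ : ((LinearMap.range ((B ∘L A - 1 : X →L[ℂ] X) : X →ₗ[ℂ] X) ⊔ LinearMap.ker (((B ∘L A - 1) ^ (n + 1) : X →L[ℂ] X) : X →ₗ[ℂ] X) :
            Submodule ℂ X) ⧸
          ((LinearMap.range ((B ∘L A - 1 : X →L[ℂ] X) : X →ₗ[ℂ] X) ⊔ LinearMap.ker (((B ∘L A - 1) ^ n : X →L[ℂ] X) : X →ₗ[ℂ] X) :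
            Submodule ℂ X)).comap
            ((LinearMap.range ((B ∘L A - 1 : X →L[ℂ] X) : X →ₗ[ℂ] X) ⊔ LinearMap.ker (((B ∘L A - 1) ^ (n + 1) : X →L[ℂ] X) : X →ₗ[ℂ] X) :
              Submodule ℂ X)).subtype) →ₗ[ℂ]
        ((LinearMap.range ((A ∘L C - 1 : Y →L[ℂ] Y) : Y →ₗ[ℂ] Y) ⊔ LinearMap.ker (((A ∘L C - 1) ^ (n + 1) : Y →L[ℂ] Y) : Y →ₗ[ℂ] Y) :
            Submodule ℂ Y) ⧸
          ((LinearMap.range ((A ∘L C - 1 : Y →L[ℂ] Y) : Y →ₗ[ℂ] Y) ⊔ LinearMap.ker (((A ∘L C - 1) ^ n : Y →L[ℂ] Y) : Y →ₗ[ℂ] Y) :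
            Submodule ℂ Y)).comap
            ((LinearMap.range ((A ∘L C - 1 : Y →L[ℂ] Y) : Y →ₗ[ℂ] Y) ⊔ LinearMap.ker (((A ∘L C - 1) ^ (n + 1) : Y →L[ℂ] Y) : Y →ₗ[ℂ] Y) :
              Submodule ℂ Y)).subtype),
      Function.Injective Φ ∧
      ∀ (x : (LinearMap.range ((B ∘L A - 1 : X →L[ℂ] X) : X →ₗ[ℂ] X) ⊔ LinearMap.ker (((B ∘L A - 1) ^ (n + 1) : X →L[ℂ] X) : X →ₗ[ℂ] X) :
            Submodule ℂ X))
        (hx : (A ∘L C ∘L A) (x : X) ∈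
          LinearMap.range ((A ∘L C - 1 : Y →L[ℂ] Y) : Y →ₗ[ℂ] Y) ⊔ LinearMap.ker (((A ∘L C - 1) ^ (n + 1) : Y →L[ℂ] Y) : Y →ₗ[ℂ] Y)),
        Φ (Submodule.Quotient.mk x) =
          Submodule.Quotient.mk ⟨(A ∘L C ∘L A) (x : X), hx⟩) ∧
    Module.rank ℂ ((LinearMap.range ((B ∘L A - 1 : X →L[ℂ] X) : X →ₗ[ℂ] X) ⊔ LinearMap.ker (((B ∘L A - 1) ^ (n + 1) : X →L[ℂ] X) : X →ₗ[ℂ] X) :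
            Submodule ℂ X) ⧸
          ((LinearMap.range ((B ∘L A - 1 : X →L[ℂ] X) : X →ₗ[ℂ] X) ⊔ LinearMap.ker (((B ∘L A - 1) ^ n : X →L[ℂ] X) : X →ₗ[ℂ] X) :
            Submodule ℂ X)).comap
            ((LinearMap.range ((B ∘L A - 1 : X →L[ℂ] X) : X →ₗ[ℂ] X) ⊔ LinearMap.ker (((B ∘L A - 1) ^ (n + 1) : X →L[ℂ] X) : X →ₗ[ℂ] X) :
              Submodule ℂ X)).subtype) ≤
      Module.rank ℂ ((LinearMap.range ((A ∘L C - 1 : Y →L[ℂ] Y) : Y →ₗ[ℂ] Y) ⊔ LinearMap.ker (((A ∘L C - 1) ^ (n + 1) : Y →L[ℂ] Y) : Y →ₗ[ℂ] Y) :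
            Submodule ℂ Y) ⧸
          ((LinearMap.range ((A ∘L C - 1 : Y →L[ℂ] Y) : Y →ₗ[ℂ] Y) ⊔ LinearMap.ker (((A ∘L C - 1) ^ n : Y →L[ℂ] Y) : Y →ₗ[ℂ] Y) :
            Submodule ℂ Y)).comap
            ((LinearMap.range ((A ∘L C - 1 : Y →L[ℂ] Y) : Y →ₗ[ℂ] Y) ⊔ LinearMap.ker (((A ∘L C - 1) ^ (n + 1) : Y →L[ℂ] Y) : Y →ₗ[ℂ] Y) :
              Submodule ℂ Y)).subtype) := by
  -- pointwise versions of the hypotheses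
  have e1 : ∀ x : X, A (B (A (B (A x)))) = A (B (A (C (A x)))) := fun x => by
    simpa using DFunLike.congr_fun h1 x
  have e2 : ∀ x : X, A (B (A (C (A x)))) = A (C (A (B (A x)))) := fun x => by
    simpa using DFunLike.congr_fun h2 x
  have e3 : ∀ x : X, A (C (A (B (A x)))) = A (C (A (C (A x)))) := fun x => by
    simpa using DFunLike.congr_fun h3 x
  set T : X →L[ℂ] X := B ∘L A - 1 with hT
  set S : Y →L[ℂ] Y := A ∘L C - 1 with hS
  set M : X →L[ℂ] Y := A ∘L C ∘L A with hM
  set W : Y →L[ℂ] X := B ∘L A ∘L B ∘L A ∘L C with hW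
  -- the three key intertwining identities
  have hSM : ∀ x, S (M x) = M (T x) := by
    intro x
    simp only [hS, hM, hT, ContinuousLinearMap.sub_apply, ContinuousLinearMap.comp_apply,
      ContinuousLinearMap.one_apply, map_sub]
    rw [← e3, ← e2, ← e1, e1, e2]
  have hTW : ∀ y, T (W y) = W (S y) := by
    intro y
    simp only [hS, hW, hT, ContinuousLinearMap.sub_apply, ContinuousLinearMap.comp_apply,
      ContinuousLinearMap.one_apply, map_sub]
    rw [e1]
  have hWM : ∀ x, W (M x) - x ∈ LinearMap.range (T : X →ₗ[ℂ] X) := by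
    intro x
    set u : X →L[ℂ] X := B ∘L A with hu
    have hWMeq : W (M x) = (u ^ 4) x := by
      simp only [hW, hM, hu, ContinuousLinearMap.comp_apply]
      rw [← e3, ← e2, ← e1]
      simp [pow_succ, ContinuousLinearMap.mul_apply]
    set v : X →L[ℂ] X := u ^ 3 + u ^ 2 + u + 1 with hv
    refine LinearMap.mem_range.mpr ⟨v x, ?_⟩
    have hfac : (u - 1) * v = u ^ 4 - 1 := by rw [hv]; noncomm_ring
    have h5 : T (v x) = ((u - 1) * v) x := by
      rw [hT]; simp [ContinuousLinearMap.mul_apply]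
    rw [ContinuousLinearMap.coe_coe, h5, hfac, hWMeq]
    simp
  -- construct Φ
  set K1 : Submodule ℂ X := LinearMap.range (T : X →ₗ[ℂ] X) ⊔ LinearMap.ker ((T ^ (n + 1) : X →L[ℂ] X) : X →ₗ[ℂ] X) with hK1
  set K0 : Submodule ℂ X := LinearMap.range (T : X →ₗ[ℂ] X) ⊔ LinearMap.ker ((T ^ n : X →L[ℂ] X) : X →ₗ[ℂ] X) with hK0
  set L1 : Submodule ℂ Y := LinearMap.range (S : Y →ₗ[ℂ] Y) ⊔ LinearMap.ker ((S ^ (n + 1) : Y →L[ℂ] Y) : Y →ₗ[ℂ] Y) with hL1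
  set L0 : Submodule ℂ Y := LinearMap.range (S : Y →ₗ[ℂ] Y) ⊔ LinearMap.ker ((S ^ n : Y →L[ℂ] Y) : Y →ₗ[ℂ] Y) with hL0
  let g : K1 →ₗ[ℂ] L1 :=
    LinearMap.codRestrict L1 ((M : X →ₗ[ℂ] Y).comp K1.subtype)
      (fun c => map_mem_sup T S M hSM (n + 1) c.1 c.2)
  let h : K1 →ₗ[ℂ] (L1 ⧸ L0.comap L1.subtype) := (L0.comap L1.subtype).mkQ.comp g
  have hker : K0.comap K1.subtype ≤ LinearMap.ker h := by
    intro c hc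
    have : M c.1 ∈ L0 := map_mem_sup T S M hSM n c.1 (Submodule.mem_comap.mp hc)
    exact LinearMap.mem_ker.mpr ((Submodule.Quotient.mk_eq_zero _).mpr this)
  have hinjcore : LinearMap.ker h ≤ K0.comap K1.subtype := by
    intro c hc
    replace hc : (Submodule.Quotient.mk (g c) : L1 ⧸ L0.comap L1.subtype) = 0 :=
      LinearMap.mem_ker.mp hc
    have hgc : g c ∈ L0.comap L1.subtype :=
      (Submodule.Quotient.mk_eq_zero (L0.comap L1.subtype)).mp hc
    have hc' : M c.1 ∈ L0 := hgc
    exact Submodule.mem_comap.mpr (inj_core T S M W hSM hTW hWM n c.1 c.2 hc')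
  set Φ := Submodule.liftQ (K0.comap K1.subtype) h hker with hΦ
  have hinj : Function.Injective Φ := by
    rw [← LinearMap.ker_eq_bot]
    exact Submodule.ker_liftQ_eq_bot _ _ _ hinjcore
  refine ⟨⟨Φ, hinj, ?_⟩, LinearMap.rank_le_of_injective Φ hinj⟩
  intro x hx
  rw [hΦ, Submodule.liftQ_apply]
  show Submodule.Quotient.mk (g x) = _
  congr 1
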